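/- Let 0 < γ < β ≤ 1, θ > 0, A > 0, δ = γ/β, and Φ(t,s) = exp( -θA(1-s)^{γ-β}(B(t,s)^{1-δ}-1)/(1-δ) ) with B(t,s) = 1 + t(1-s)^β/A. With normalization z = z(t) = (A/t)^{1/γ}, for every λ > 0, lim_{t→∞} Φ(t, e^{-λz}) = exp(-θAλ^γ). -/

import Mathlib

open Real Filter

private lemma key_alg (θ A γ β p t u : ℝ) (ht : 0 < t) (hu : 0 < u) (hA : 0 < A)
    (hp : p ≠ 0) :
    -θ * (t * u ^ γ) * (((1 + t * u ^ β / A) ^ p - 1) / (p * (t * u ^ β / A)))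
      = -(θ * A) * u ^ (γ - β) * (((1 + t * u ^ β / A) ^ p - 1) / p) := by
  have hub : (0:ℝ) < u ^ β := Real.rpow_pos_of_pos hu β
  have hsplit : u ^ γ = u ^ (γ - β) * u ^ β := by
    rw [← Real.rpow_add hu]; ring_nf
  rw [hsplit]
  field_simp

theorem stable_limit_gamma_lt_beta
    (β γ θ A δ : ℝ) (hγ : 0 < γ) (hγβ : γ < β) (hβ1 : β ≤ 1)
    (hθ : 0 < θ) (hA : 0 < A) (hδ : δ = γ / β)
    (B Φ : ℝ → ℝ → ℝ)
    (hB : ∀ t s, B t s = 1 + t * (1 - s) ^ β / A)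
    (hΦ : ∀ t s, Φ t s = Real.exp (-(θ * A) * (1 - s) ^ (γ - β) * ((B t s ^ (1 - δ) - 1) / (1 - δ)))) :
    ∀ lam : ℝ, 0 < lam →
      Tendsto (fun t : ℝ => Φ t (Real.exp (-lam * (A / t) ^ (1 / γ))))
        atTop (nhds (Real.exp (-(θ * A) * lam ^ γ))) := by
  intro lam hlam
  have hβ : 0 < β := hγ.trans hγβ
  have hδlt : δ < 1 := by rw [hδ]; exact (div_lt_one hβ).2 hγβ
  set p : ℝ := 1 - δ with hp
  have hppos : 0 < p := by simp only [hp]; linarith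
  set z : ℝ → ℝ := fun t => (A / t) ^ (1 / γ) with hzdef
  set u : ℝ → ℝ := fun t => 1 - Real.exp (-lam * z t) with hudef
  set x : ℝ → ℝ := fun t => t * u t ^ β / A with hxdef
  -- eventual positivity
  have hev : ∀ᶠ t : ℝ in atTop, 0 < t := eventually_gt_atTop 0
  have hzpos : ∀ᶠ t : ℝ in atTop, 0 < z t :=
    hev.mono fun t ht => Real.rpow_pos_of_pos (div_pos hA ht) _
  have hupos : ∀ᶠ t : ℝ in atTop, 0 < u t := hzpos.mono fun t ht => by
    have h1 : Real.exp (-lam * z t) < 1 := by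
      rw [Real.exp_lt_one_iff]; nlinarith
    simpa [hudef, sub_pos] using h1
  have hxpos : ∀ᶠ t : ℝ in atTop, 0 < x t := by
    filter_upwards [hev, hupos] with t ht hut
    exact div_pos (mul_pos ht (Real.rpow_pos_of_pos hut β)) hA
  -- z → 0
  have hAdiv : Tendsto (fun t : ℝ => A / t) atTop (nhds 0) :=
    tendsto_const_nhds.div_atTop tendsto_id
  have hz0 : Tendsto z atTop (nhds 0) := by
    have hc := (Real.continuousAt_rpow_const 0 (1 / γ) (Or.inr (by positivity))).tendsto
    have h := hc.comp hAdiv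
    simp only [Real.zero_rpow (by positivity : (1:ℝ)/γ ≠ 0)] at h
    exact h
  -- u → 0
  have hu0 : Tendsto u atTop (nhds 0) := by
    have h0 : Tendsto (fun t => -lam * z t) atTop (nhds 0) := by
      have h := hz0.const_mul (-lam)
      rwa [mul_zero] at h
    have h1 : Tendsto (fun t => Real.exp (-lam * z t)) atTop (nhds 1) := by
      have h := (Real.continuous_exp.tendsto 0).comp h0
      rwa [Real.exp_zero] at h
    have h2 := h1.const_sub 1
    rwa [sub_self] at h2
  -- u / z → lam
  have hD : HasDerivAt (fun y : ℝ => 1 - Real.exp (-lam * y)) lam 0 := by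
    have h1 : HasDerivAt (fun y : ℝ => -lam * y) (-lam) 0 := by
      simpa using (hasDerivAt_id (0:ℝ)).const_mul (-lam)
    have h2 := (Real.hasDerivAt_exp (-lam * 0)).comp 0 h1
    have h3 := h2.const_sub 1
    simpa using h3
  have hslope : Tendsto (fun y : ℝ => (1 - Real.exp (-lam * y)) / y)
      (nhdsWithin 0 {(0:ℝ)}ᶜ) (nhds lam) := by
    have hs := hasDerivAt_iff_tendsto_slope.mp hD
    refine hs.congr' ?_
    filter_upwards [self_mem_nhdsWithin] with y hy
    simp [slope_def_field]
  have hznz : Tendsto z atTop (nhdsWithin 0 {(0:ℝ)}ᶜ) :=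
    tendsto_nhdsWithin_of_tendsto_nhds_of_eventually_within _ hz0
      (hzpos.mono fun t ht => ne_of_gt ht)
  have hudivz : Tendsto (fun t => u t / z t) atTop (nhds lam) := hslope.comp hznz
  -- t * u^γ → A * lam^γ
  have htu : Tendsto (fun t => t * u t ^ γ) atTop (nhds (A * lam ^ γ)) := by
    have h1 : Tendsto (fun t => A * (u t / z t) ^ γ) atTop (nhds (A * lam ^ γ)) :=
      tendsto_const_nhds.mul (hudivz.rpow_const (Or.inr hγ.le))
    refine h1.congr' ?_
    filter_upwards [hev, hzpos, hupos] with t ht hzt hut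
    have hzg : z t ^ γ = A / t := by
      have hle : (0:ℝ) ≤ A / t := (div_pos hA ht).le
      rw [hzdef]
      rw [← Real.rpow_mul hle, one_div, inv_mul_cancel₀ (ne_of_gt hγ), Real.rpow_one]
    have hdiv : (u t / z t) ^ γ = u t ^ γ / z t ^ γ := Real.div_rpow hut.le hzt.le γ
    rw [hdiv, hzg]
    field_simp
  -- x → 0
  have hx0 : Tendsto x atTop (nhds 0) := by
    have hub : Tendsto (fun t => u t ^ (β - γ)) atTop (nhds 0) := by
      have := hu0.rpow_const (p := β - γ) (Or.inr (by linarith))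
      simpa [Real.zero_rpow (by linarith : β - γ ≠ 0)] using this
    have h1 : Tendsto (fun t => t * u t ^ γ * u t ^ (β - γ) / A) atTop
        (nhds (A * lam ^ γ * 0 / A)) := (htu.mul hub).div_const A
    rw [mul_zero, zero_div] at h1
    refine h1.congr' ?_
    filter_upwards [hupos] with t hut
    have : u t ^ γ * u t ^ (β - γ) = u t ^ β := by
      rw [← Real.rpow_add hut]; ring_nf
    simp only [hxdef, mul_assoc, this]
  have hxne : Tendsto x atTop (nhdsWithin 0 {(0:ℝ)}ᶜ) :=
    tendsto_nhdsWithin_of_tendsto_nhds_of_eventually_within _ hx0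
      (hxpos.mono fun t ht => ne_of_gt ht)
  -- ratio ((1+y)^p - 1)/(p*y) → 1
  have hDp : HasDerivAt (fun y : ℝ => (1 + y) ^ p) p 0 := by
    have h1 : HasDerivAt (fun y : ℝ => 1 + y) 1 0 := by
      simpa using (hasDerivAt_id (0:ℝ)).const_add (1:ℝ)
    have h2 := (Real.hasDerivAt_rpow_const (x := (1:ℝ) + 0) (p := p)
      (Or.inl (by norm_num))).comp 0 h1
    simp at h2; exact h2
  have hq : Tendsto (fun y : ℝ => ((1 + y) ^ p - 1) / (p * y))
      (nhdsWithin 0 {(0:ℝ)}ᶜ) (nhds 1) := by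
    have hs := hasDerivAt_iff_tendsto_slope.mp hDp
    have hs2 : Tendsto (fun y : ℝ => p⁻¹ * (((1 + y) ^ p - 1) / y))
        (nhdsWithin 0 {(0:ℝ)}ᶜ) (nhds (p⁻¹ * p)) := by
      refine (hs.const_mul p⁻¹).congr' ?_
      filter_upwards [self_mem_nhdsWithin] with y hy
      simp [slope_def_field]
    rw [inv_mul_cancel₀ (ne_of_gt hppos)] at hs2
    refine hs2.congr ?_
    intro y
    simp only [div_eq_mul_inv, mul_inv]
    ring
  have hqx : Tendsto (fun t => ((1 + x t) ^ p - 1) / (p * x t)) atTop (nhds 1) :=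
    hq.comp hxne
  -- assemble
  have hF : Tendsto (fun t => -θ * (t * u t ^ γ) * (((1 + x t) ^ p - 1) / (p * x t)))
      atTop (nhds (-(θ * A) * lam ^ γ)) := by
    have h1 := (htu.const_mul (-θ)).mul hqx
    convert h1 using 2
    ring
  have hFe := (Real.continuous_exp.tendsto _).comp hF
  refine hFe.congr' ?_
  filter_upwards [hev, hupos] with t ht hut
  show Real.exp (-θ * (t * u t ^ γ) * (((1 + x t) ^ p - 1) / (p * x t)))
      = Φ t (Real.exp (-lam * z t))
  rw [hΦ, hB]
  have h1s : 1 - Real.exp (-lam * z t) = u t := rfl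
  rw [h1s]
  rw [key_alg θ A γ β p t (u t) ht hut hA (ne_of_gt hppos)]
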